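/- Let S be a left cancellative monoid and R a ring with a finite S-grading. If the neutral component R_e is nil and f-commutative, then R is nil. Moreover, if R_e is nil of bounded index, then R is nil of bounded index. -/

import Mathlib

/-- Product `a * l₀ * l₁ * ⋯` of a nonempty list of ring elements. -/
def mulList {R : Type*} [Mul R] (a : R) (l : List R) : R := l.foldl (· * ·) a

/-- `pw a n` is `aⁿ` for `n ≥ 1` (junk value `0` at `n = 0`). -/
def pw {R : Type*} [Mul R] [Zero R] (a : R) : ℕ → R
  | 0 => 0
  | 1 => a
  | n + 2 => pw a (n + 1) * a

/-- Product of `n` elements given by `f` (junk `0` when `n = 0`). -/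
def finProd {R : Type*} [Mul R] [Zero R] : {n : ℕ} → (Fin n → R) → R
  | 0, _ => 0
  | n + 1, f => mulList (f 0) (List.ofFn fun i : Fin n => f i.succ)

/-- `R ^ n = 0`: every product of `n` elements of `R` vanishes. -/
def PowZero (R : Type*) [Mul R] [Zero R] (n : ℕ) : Prop :=
  ∀ (a : R) (l : List R), l.length + 1 = n → mulList a l = 0

/-- `T ^ n = 0` for a subset `T` of a ring. -/
def PowZeroOn {R : Type*} [Mul R] [Zero R] (T : Set R) (n : ℕ) : Prop :=
  ∀ (a : R) (l : List R), a ∈ T → (∀ x ∈ l, x ∈ T) → l.length + 1 = n → mulList a l = 0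

/-- `a` is nilpotent: `aⁿ = 0` for some `n ≥ 1`. -/
def IsNilE {R : Type*} [Mul R] [Zero R] (a : R) : Prop := ∃ n, 1 ≤ n ∧ pw a n = 0

/-- A nil ring: every element is nilpotent. -/
def IsNilRing (R : Type*) [Mul R] [Zero R] : Prop := ∀ a : R, IsNilE a

/-- An `S`-grading of the ring `R`: a direct sum decomposition into additive
subgroups with `R_g R_h ⊆ R_{gh}`. -/
structure IsGrading {S R : Type*} [Monoid S] [NonUnitalRing R] [DecidableEq S]
    (A : S → AddSubgroup R) : Prop where
  mul_mem : ∀ {g h : S} {x y : R}, x ∈ A g → y ∈ A h → x * y ∈ A (g * h)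
  isInternal : DirectSum.IsInternal A

/-- Grading by an additively written monoid. -/
structure IsAddGrading {S R : Type*} [AddMonoid S] [NonUnitalRing R] [DecidableEq S]
    (A : S → AddSubgroup R) : Prop where
  mul_mem : ∀ {g h : S} {x y : R}, x ∈ A g → y ∈ A h → x * y ∈ A (g + h)
  isInternal : DirectSum.IsInternal A

/-- The subset `T` of a ring is `f`-commutative: there are a semigroup `G` acting on it
from the left and a map `f` with `a*b = f(a,b)·(b*a)`. -/
def IsFCommutativeOn {R : Type*} [Mul R] (T : Set R) : Prop :=
  ∃ (G : Type) (_ : Semigroup G) (act : G → R → R),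
    (∀ l m : G, ∀ x : R, x ∈ T → act (l * m) x = act l (act m x)) ∧
    (∀ l : G, ∀ x : R, x ∈ T → act l x ∈ T) ∧
    (∀ l : G, ∀ x y : R, x ∈ T → y ∈ T → act l (x * y) = act l x * y) ∧
    ∃ f : R → R → G, ∀ a b : R, a ∈ T → b ∈ T → a * b = act (f a b) (b * a)

/-- The ring `R` is `f`-commutative. -/
def IsFCommutative (R : Type*) [Mul R] : Prop :=
  ∃ (G : Type) (_ : Semigroup G) (act : G → R → R),
    (∀ l m : G, ∀ x : R, act (l * m) x = act l (act m x)) ∧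
    (∀ l : G, ∀ x y : R, act l (x * y) = act l x * y) ∧
    ∃ f : R → R → G, ∀ a b : R, a * b = act (f a b) (b * a)

/-- The order of `g`: least `n ≥ 1` with `gⁿ = 1`, and `0` if no such `n` exists. -/
noncomputable def ordOf {S : Type*} [Monoid S] (g : S) : ℕ := sInf {n | 1 ≤ n ∧ g ^ n = 1}

set_option linter.unusedSectionVars false

section Base
variable {R : Type*} [NonUnitalRing R]

def prodL : List R → R
  | [] => 0
  | a :: t => mulList a t

@[simp] lemma mulList_nil (a : R) : mulList a [] = a := rfl

lemma mulList_cons (a b : R) (l : List R) : mulList a (b :: l) = mulList (a * b) l := rfl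

lemma mulList_append (a : R) (l₁ l₂ : List R) :
    mulList a (l₁ ++ l₂) = mulList (mulList a l₁) l₂ := List.foldl_append ..

lemma mulList_assoc (a : R) : ∀ (l : List R) (b : R), mulList (a * b) l = a * mulList b l
  | [], b => rfl
  | c :: t, b => by
      rw [mulList_cons, mulList_cons, mul_assoc, mulList_assoc a t (b * c)]

lemma mulList_zero : ∀ l : List R, mulList 0 l = 0
  | [] => rfl
  | c :: t => by rw [mulList_cons, zero_mul, mulList_zero t]

lemma prodL_cons (a : R) (l : List R) : prodL (a :: l) = mulList a l := rfl

lemma mulList_eq_mul_prodL (a : R) (l : List R) (h : l ≠ []) :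
    mulList a l = a * prodL l := by
  cases l with
  | nil => exact absurd rfl h
  | cons b t => rw [mulList_cons, prodL_cons, mulList_assoc]

lemma prodL_append (l₁ l₂ : List R) (h₁ : l₁ ≠ []) (h₂ : l₂ ≠ []) :
    prodL (l₁ ++ l₂) = prodL l₁ * prodL l₂ := by
  cases l₁ with
  | nil => exact absurd rfl h₁
  | cons a t =>
      rw [List.cons_append, prodL_cons, prodL_cons, mulList_append,
        mulList_eq_mul_prodL _ _ h₂]

lemma mulList_eq_zero_of_mem (a : R) (l : List R) (h : (0:R) ∈ l) : mulList a l = 0 := by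
  obtain ⟨u, v, rfl⟩ := List.append_of_mem h
  rw [mulList_append, mulList_cons, mul_zero, mulList_zero]

lemma pw_succ (a : R) (n : ℕ) (h : 1 ≤ n) : pw a (n + 1) = pw a n * a := by
  cases n with
  | zero => omega
  | succ m => rfl

lemma pw_eq_mulList (a : R) : ∀ s : ℕ, 1 ≤ s → pw a s = mulList a (List.replicate (s - 1) a)
  | 1, _ => rfl
  | s + 2, _ => by
      have ih := pw_eq_mulList a (s + 1) (by omega)
      rw [pw_succ a (s+1) (by omega), ih]
      have : (s + 2 - 1) = (s + 1 - 1) + 1 := by omega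
      rw [this, List.replicate_succ' , mulList_append]
      rfl

lemma pw_zero_mono (a : R) (n m : ℕ) (h1 : 1 ≤ n) (h : pw a n = 0) (hnm : n ≤ m) :
    pw a m = 0 := by
  induction m with
  | zero => omega
  | succ k ih =>
      rcases Nat.lt_or_ge n (k+1) with hlt | hge
      · have hk : pw a k = 0 := ih (by omega)
        rw [pw_succ a k (by omega), hk, zero_mul]
      · have : n = k + 1 := by omega
        rw [← this]; exact h

end Base

section FComm
variable {R : Type*} [NonUnitalRing R] [DecidableEq R]
variable (T : Set R) (hT0 : (0:R) ∈ T) (hTmul : ∀ a b : R, a ∈ T → b ∈ T → a * b ∈ T)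
variable {G : Type} [Semigroup G] (act : G → R → R)
variable (hact1 : ∀ l m : G, ∀ x : R, x ∈ T → act (l * m) x = act l (act m x))
variable (hact3 : ∀ l : G, ∀ x y : R, x ∈ T → y ∈ T → act l (x * y) = act l x * y)
variable (f : R → R → G) (hf : ∀ a b : R, a ∈ T → b ∈ T → a * b = act (f a b) (b * a))

include hTmul in
lemma mulList_mem (a : R) (l : List R) (ha : a ∈ T) (hl : ∀ y ∈ l, y ∈ T) :
    mulList a l ∈ T := by
  induction l generalizing a with
  | nil => exact ha
  | cons b t ih =>
      rw [mulList_cons]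
      exact ih _ (hTmul _ _ ha (hl b (List.mem_cons_self ..))) 
        (fun y hy => hl y (List.mem_cons_of_mem _ hy))

include hT0 hact3 in
lemma act_zero (Λ : G) : act Λ (0 : R) = 0 := by
  have := hact3 Λ 0 0 hT0 hT0
  rw [mul_zero] at this
  rw [this, mul_zero]

include hTmul hact3 in
lemma act_mulList (Λ : G) (z : R) (l : List R) (hz : z ∈ T) (hl : ∀ y ∈ l, y ∈ T) :
    mulList (act Λ z) l = act Λ (mulList z l) := by
  induction l generalizing z with
  | nil => rfl
  | cons b t ih =>
      rw [mulList_cons, mulList_cons, ← hact3 Λ z b hz (hl b (List.mem_cons_self ..))]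
      exact ih _ (hTmul _ _ hz (hl b (List.mem_cons_self ..)))
        (fun y hy => hl y (List.mem_cons_of_mem _ hy))

/-- `P` is reachable from `Q` by the semigroup action. -/
def RelA (P Q : R) : Prop := P = Q ∨ ∃ Λ : G, P = act Λ Q

include hact1 in
lemma rel_trans {P Q Z : R} (h1 : RelA act P Q) (h2 : RelA act Q Z) (hZ : Z ∈ T) :
    RelA act P Z := by
  rcases h1 with rfl | ⟨Λ, rfl⟩
  · exact h2
  · rcases h2 with rfl | ⟨Λ', rfl⟩
    · exact Or.inr ⟨Λ, rfl⟩
    · exact Or.inr ⟨Λ * Λ', by rw [hact1 Λ Λ' Z hZ]⟩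

include hT0 hact3 in
lemma rel_zero {P Q : R} (h : RelA act P Q) (hQ : Q = 0) : P = 0 := by
  rcases h with rfl | ⟨Λ, rfl⟩
  · exact hQ
  · rw [hQ, act_zero T hT0 act hact3]

include hT0 hTmul hact1 hact3 hf in
lemma rot1 (c y : R) (l : List R) (hc : c ∈ T) (hy : y ∈ T) (hl : ∀ z ∈ l, z ∈ T) :
    RelA act (mulList c (y :: l)) (mulList c (l ++ [y])) := by
  have hyc : y * c ∈ T := hTmul _ _ hy hc
  have h1 : mulList c (y :: l) = act (f c y) (mulList (y * c) l) := by
    rw [mulList_cons, hf c y hc hy]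
    exact act_mulList T hTmul act hact3 _ _ _ hyc hl
  have hP : mulList c l ∈ T := mulList_mem T hTmul c l hc hl
  have h2 : mulList (y * c) l = act (f y (mulList c l)) (mulList c (l ++ [y])) := by
    have e5 : mulList (y * c) l = y * mulList c l := mulList_assoc y l c
    rw [e5, hf y _ hy hP, mulList_append]
    rfl
  have hfin : mulList c (l ++ [y]) ∈ T :=
    mulList_mem T hTmul c _ hc (by
      intro z hz
      rcases List.mem_append.1 hz with h | h
      · exact hl z h
      · rw [List.mem_singleton.1 h]; exact hy)
  refine Or.inr ⟨f c y * f y (mulList c l), ?_⟩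
  rw [hact1 _ _ _ hfin, ← h2, ← h1]

include hT0 hTmul hact1 hact3 hf in
lemma rotToFront (b : R) (hb : b ∈ T) :
    ∀ (u : List R) (v : List R) (c : R), c ∈ T → (∀ z ∈ u, z ∈ T) → (∀ z ∈ v, z ∈ T) →
    ∃ m : List R, (∀ z ∈ m, z ∈ T) ∧ m.length = u.length + v.length ∧
      m.count b = u.count b + v.count b ∧
      RelA act (mulList c (u ++ b :: v)) (mulList c (b :: m)) := by
  intro u
  induction u with
  | nil =>
      intro v c hc hu hv
      exact ⟨v, hv, by simp, by simp, Or.inl rfl⟩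
  | cons y u' ih =>
      intro v c hc hu hv
      have hy : y ∈ T := hu y (List.mem_cons_self ..)
      have hu' : ∀ z ∈ u', z ∈ T := fun z hz => hu z (List.mem_cons_of_mem _ hz)
      have hall : ∀ z ∈ u' ++ b :: v, z ∈ T := by
        intro z hz
        rcases List.mem_append.1 hz with h | h
        · exact hu' z h
        · rcases List.mem_cons.1 h with rfl | h
          · exact hb
          · exact hv z h
      have step : RelA act (mulList c ((y :: u') ++ b :: v))
          (mulList c (u' ++ b :: (v ++ [y]))) := by
        have := rot1 T hT0 hTmul act hact1 hact3 f hf c y (u' ++ b :: v) hc hy hall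
        simpa using this
      have hv' : ∀ z ∈ v ++ [y], z ∈ T := by
        intro z hz
        rcases List.mem_append.1 hz with h | h
        · exact hv z h
        · rw [List.mem_singleton.1 h]; exact hy
      obtain ⟨m, hmT, hmlen, hmcount, hmrel⟩ := ih (v ++ [y]) c hc hu' hv'
      refine ⟨m, hmT, by simp at hmlen ⊢; omega, ?_, ?_⟩
      · rw [hmcount, List.count_append]
        simp [List.count_cons, List.count_singleton']
        omega
      · refine rel_trans T act hact1 step (rel_trans T act hact1 ?_ hmrel ?_) ?_
        · exact Or.inl rfl
        · exact mulList_mem T hTmul _ _ hc (by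
            intro z hz
            rcases List.mem_cons.1 hz with rfl | h
            · exact hb
            · exact hmT z h)
        · exact mulList_mem T hTmul _ _ hc (by
            intro z hz
            rcases List.mem_cons.1 hz with rfl | h
            · exact hb
            · exact hmT z h)

include hT0 hTmul hact1 hact3 hf in
lemma gather (b : R) (hb : b ∈ T) :
    ∀ (j : ℕ) (l : List R) (c : R), c ∈ T → (∀ z ∈ l, z ∈ T) → j ≤ l.count b →
    ∃ m : List R, (∀ z ∈ m, z ∈ T) ∧ m.length + j = l.length ∧
      RelA act (mulList c l) (mulList (mulList c (List.replicate j b)) m) := by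
  intro j
  induction j with
  | zero =>
      intro l c hc hl _
      exact ⟨l, hl, by simp, Or.inl rfl⟩
  | succ j ih =>
      intro l c hc hl hcount
      have hbmem : b ∈ l := by
        have : 0 < l.count b := by omega
        exact List.count_pos_iff.1 ((by omega : 0 < l.count b))
      obtain ⟨u, v, rfl⟩ := List.append_of_mem hbmem
      have hu : ∀ z ∈ u, z ∈ T := fun z hz => hl z (by simp [hz])
      have hv : ∀ z ∈ v, z ∈ T := fun z hz => hl z (by simp [hz])
      obtain ⟨m, hmT, hmlen, hmcount, hmrel⟩ :=
        rotToFront T hT0 hTmul act hact1 hact3 f hf b hb u v c hc hu hv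
      have hcount' : j ≤ m.count b := by
        rw [hmcount]
        have : (u ++ b :: v).count b = u.count b + (v.count b + 1) := by
          rw [List.count_append, List.count_cons]
          simp
        omega
      obtain ⟨m', hm'T, hm'len, hm'rel⟩ := ih m (c * b) (hTmul _ _ hc hb) hmT hcount'
      refine ⟨m', hm'T, ?_, ?_⟩
      · simp at hmlen ⊢
        omega
      · have key : mulList c (b :: m) = mulList (c * b) m := rfl
        have keyr : mulList (c * b) (List.replicate j b) =
            mulList c (List.replicate (j+1) b) := by
          rw [List.replicate_succ]
          rfl
        rw [← keyr]
        refine rel_trans T act hact1 hmrel ?_ ?_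
        · rw [key]; exact hm'rel
        · exact mulList_mem T hTmul _ _
            (mulList_mem T hTmul _ _ (hTmul _ _ hc hb)
              (by intro z hz; rw [List.eq_of_mem_replicate hz]; exact hb)) hm'T

include hT0 hTmul hact1 hact3 hf in
lemma lemA (b : R) (hb : b ∈ T) (s : ℕ) (hs : 1 ≤ s) (hpw : pw b s = 0)
    (l : List R) (hl : ∀ z ∈ l, z ∈ T) (hcount : s ≤ l.count b) :
    prodL l = 0 := by
  cases l with
  | nil => simp at hcount; omega
  | cons c t =>
      have hc : c ∈ T := hl c (List.mem_cons_self ..)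
      have ht : ∀ z ∈ t, z ∈ T := fun z hz => hl z (List.mem_cons_of_mem _ hz)
      rw [prodL_cons]
      by_cases hcb : c = b
      · subst hcb
        have hcount' : s - 1 ≤ t.count c := by
          rw [List.count_cons] at hcount
          simp at hcount
          omega
        obtain ⟨m, hmT, _, hrel⟩ :=
          gather T hT0 hTmul act hact1 hact3 f hf c hc (s-1) t c hc ht hcount'
        refine rel_zero T hT0 act hact3 hrel ?_
        rw [← pw_eq_mulList c s hs, hpw, mulList_zero]
      · have hcount' : s ≤ t.count b := by
          rw [List.count_cons] at hcount
          simp [hcb] at hcount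
          omega
        obtain ⟨m, hmT, _, hrel⟩ :=
          gather T hT0 hTmul act hact1 hact3 f hf b hb s t c hc ht hcount'
        refine rel_zero T hT0 act hact3 hrel ?_
        have : mulList c (List.replicate s b) = c * pw b s := by
          have h1 : List.replicate s b = b :: List.replicate (s-1) b := by
            rw [← List.replicate_succ]
            congr 1
            omega
          rw [h1, mulList_cons, mulList_assoc, ← pw_eq_mulList b s hs]
        rw [this, hpw, mul_zero, mulList_zero]

include hT0 hTmul hact1 hact3 hf in
lemma lemB (s : ℕ) (hs : 1 ≤ s) (l : List R)
    (hl : ∀ z ∈ l, z ∈ T ∧ pw z s = 0)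
    (hlen : l.toFinset.card * (s - 1) < l.length) :
    prodL l = 0 := by
  classical
  have : ∃ b ∈ l.toFinset, s ≤ l.count b := by
    by_contra hcon
    push_neg at hcon
    have hle : ∀ b ∈ l.toFinset, l.count b ≤ s - 1 := by
      intro b hb
      have := hcon b hb
      omega
    have := Finset.sum_le_sum hle
    have hsum : ∑ i ∈ l.toFinset, List.count i l = l.length := by
      have := Multiset.toFinset_sum_count_eq (l : Multiset R)
      simpa using this
    have hcard : (∑ _b ∈ l.toFinset, (s-1)) = l.toFinset.card * (s-1) := by
      rw [Finset.sum_const, smul_eq_mul]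
    omega
  obtain ⟨b, hbmem, hbcount⟩ := this
  have hbl : b ∈ l := List.mem_toFinset.1 hbmem
  exact lemA T hT0 hTmul act hact1 hact3 f hf b (hl b hbl).1 s hs (hl b hbl).2 l
    (fun z hz => (hl z hz).1) hbcount

end FComm

section Graded
variable {S : Type*} {R : Type*} [Monoid S] [DecidableEq S] [NonUnitalRing R]

/-- Value of a word. -/
def valW (x : S → R) (w : List S) : R := prodL (w.map x)

lemma prodL_eq_zero_of_mem {l : List R} (h : (0:R) ∈ l) : prodL l = 0 := by
  cases l with
  | nil => rfl
  | cons c t =>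
      rcases List.mem_cons.1 h with hc | hc
      · rw [prodL_cons, ← hc, mulList_zero]
      · rw [prodL_cons, mulList_eq_zero_of_mem _ _ hc]

lemma valW_append (x : S → R) (w₁ w₂ : List S) (h₁ : w₁ ≠ []) (h₂ : w₂ ≠ []) :
    valW x (w₁ ++ w₂) = valW x w₁ * valW x w₂ := by
  unfold valW
  rw [List.map_append]
  exact prodL_append _ _ (by simpa using h₁) (by simpa using h₂)

lemma valW_singleton (x : S → R) (g : S) : valW x [g] = x g := rfl

variable (A : S → AddSubgroup R)

lemma valW_mem (hmul : ∀ {g h : S} {u v : R}, u ∈ A g → v ∈ A h → u * v ∈ A (g * h))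
    (x : S → R) (hx : ∀ g, x g ∈ A g) (w : List S) : valW x w ∈ A w.prod := by
  induction w using List.reverseRecOn with
  | nil => exact (A 1).zero_mem
  | append_singleton w g ih =>
      cases eq_or_ne w [] with
      | inl h => subst h; simpa [valW_singleton] using hx g
      | inr h =>
          rw [valW_append x w [g] h (by simp), List.prod_append, List.prod_singleton]
          exact hmul ih (hx g)

lemma valW_zero_letter (x : S → R) (w : List S) (h : ∃ g ∈ w, x g = 0) :
    valW x w = 0 := by
  obtain ⟨g, hg, hgz⟩ := h
  exact prodL_eq_zero_of_mem (by
    rw [← hgz]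
    exact List.mem_map_of_mem hg)

lemma valW_prefix_zero (x : S → R) (w : List S) (j : ℕ) (hj1 : 1 ≤ j) (hj2 : j ≤ w.length)
    (h : valW x (w.take j) = 0) : valW x w = 0 := by
  have hw : w = w.take j ++ w.drop j := (List.take_append_drop j w).symm
  cases eq_or_ne (w.drop j) [] with
  | inl hd => rw [hw, hd, List.append_nil]; exact h
  | inr hd =>
      rw [hw, valW_append x _ _ ?_ hd, h, zero_mul]
      have : (w.take j).length = j := by simp; omega
      intro hc
      rw [hc] at this
      simp at this
      omega

lemma valW_flatten (x : S → R) (Bs : List (List S)) (hB : ∀ B ∈ Bs, B ≠ []) :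
    valW x Bs.flatten = prodL (Bs.map (valW x)) := by
  induction Bs with
  | nil => rfl
  | cons B Bs' ih =>
      rw [List.flatten_cons, List.map_cons, prodL_cons]
      cases eq_or_ne Bs' [] with
      | inl h => subst h; simp
      | inr h =>
          have hflat : Bs'.flatten ≠ [] := by
            intro hc
            rw [List.flatten_eq_nil_iff] at hc
            rcases List.exists_mem_of_ne_nil Bs' h with ⟨B', hB'⟩
            exact hB B' (List.mem_cons_of_mem _ hB') (hc B' hB')
          rw [valW_append x B Bs'.flatten (hB B (List.mem_cons_self ..)) hflat,
            ih (fun B' h' => hB B' (List.mem_cons_of_mem _ h')),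
            mulList_eq_mul_prodL _ _ (by simpa using h)]

/-- Finset of words of length at most `n` with letters in `Sig`. -/
def WSet (Sig : Finset S) : ℕ → Finset (List S)
  | 0 => {[]}
  | n+1 => insert [] ((Sig ×ˢ WSet Sig n).image fun p => p.1 :: p.2)

lemma mem_WSet (Sig : Finset S) : ∀ (n : ℕ) (w : List S), w.length ≤ n →
    (∀ g ∈ w, g ∈ Sig) → w ∈ WSet Sig n := by
  intro n
  induction n with
  | zero =>
      intro w hw _
      have hw0 : w = [] := List.length_eq_zero_iff.1 (by omega)
      subst hw0
      exact Finset.mem_singleton_self _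
  | succ n ih =>
      intro w hw hmem
      cases w with
      | nil => exact Finset.mem_insert_self _ _
      | cons g t =>
          refine Finset.mem_insert_of_mem (Finset.mem_image.2 ⟨(g, t), ?_, rfl⟩)
          refine Finset.mem_product.2 ⟨hmem g (List.mem_cons_self ..), ?_⟩
          exact ih t (by simp at hw; omega) (fun h hh => hmem h (List.mem_cons_of_mem _ hh))

end Graded

section Peel
variable {S : Type*} {R : Type*} [Monoid S] [IsLeftCancelMul S] [DecidableEq S] [NonUnitalRing R]

lemma peel (x : S → R) (Sig' : Finset S) (τ : S) (ℓ : ℕ) (hℓ : 1 ≤ ℓ)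
    (hIH : ∀ (σ : S) (w : List S),
      (∀ j, 1 ≤ j → j ≤ w.length → σ * (w.take j).prod ∈ Sig'.erase τ) →
      ℓ ≤ w.length → valW x w = 0) :
    ∀ (n : ℕ) (w : List S), w.length ≤ n →
    (∀ j, 1 ≤ j → j ≤ w.length → τ * (w.take j).prod ∈ Sig') →
    valW x w ≠ 0 →
    ∃ (Bs : List (List S)) (Q : List S), w = Bs.flatten ++ Q ∧
      (∀ B ∈ Bs, B ≠ [] ∧ B.prod = 1 ∧ B.length ≤ ℓ) ∧ Q.length < ℓ := by
  intro n
  induction n with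
  | zero =>
      intro w hn _ _
      have hw0 : w = [] := List.length_eq_zero_iff.1 (by omega)
      subst hw0
      exact ⟨[], [], rfl, by simp, by omega⟩
  | succ n ih =>
      intro w hn hpref hw0
      by_cases hhit : ∃ j, (1 ≤ j ∧ j ≤ w.length) ∧ τ * (w.take j).prod = τ
      · set j₁ := Nat.find hhit with hj₁def
        obtain ⟨⟨hj₁1, hj₁2⟩, hj₁eq⟩ := Nat.find_spec hhit
        -- bound on j₁
        have hj₁ℓ : j₁ ≤ ℓ := by
          by_contra hcon
          push_neg at hcon
          have hB' : valW x (w.take (j₁ - 1)) = 0 := by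
            refine hIH τ (w.take (j₁ - 1)) ?_ ?_
            · intro r hr1 hr2
              have hlr : (w.take (j₁ - 1)).length = j₁ - 1 := by
                rw [List.length_take]; omega
              rw [hlr] at hr2
              rw [List.take_take]
              have hmin : min r (j₁ - 1) = r := by omega
              rw [hmin]
              refine Finset.mem_erase.2 ⟨?_, hpref r hr1 (by omega)⟩
              intro hceq
              exact Nat.find_min hhit (show r < j₁ by omega) ⟨⟨hr1, by omega⟩, hceq⟩
            · rw [List.length_take]; omega
          exact hw0 (valW_prefix_zero x w (j₁ - 1) (by omega) (by omega) hB')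
        have hBprod : (w.take j₁).prod = 1 := by
          have : τ * (w.take j₁).prod = τ * 1 := by rw [mul_one]; exact hj₁eq
          exact mul_left_cancel this
        have hBne : w.take j₁ ≠ [] := by
          have hlt : (w.take j₁).length = j₁ := by rw [List.length_take]; omega
          intro hc
          rw [hc] at hlt
          simp at hlt
          omega
        cases eq_or_ne (w.drop j₁) [] with
        | inl hdrop =>
            refine ⟨[w.take j₁], [], ?_, ?_, by simpa using (show 0 < ℓ by omega)⟩
            · simp [← hdrop]
            · intro B hB
              rw [List.mem_singleton.1 hB]
              exact ⟨hBne, hBprod, by rw [List.length_take]; omega⟩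
        | inr hdrop =>
            have hw'len : (w.drop j₁).length ≤ n := by
              rw [List.length_drop]; omega
            have hw'pref : ∀ j, 1 ≤ j → j ≤ (w.drop j₁).length →
                τ * ((w.drop j₁).take j).prod ∈ Sig' := by
              intro r hr1 hr2
              rw [List.length_drop] at hr2
              have htk : w.take (j₁ + r) = w.take j₁ ++ (w.drop j₁).take r :=
                List.take_add ..
              have := hpref (j₁ + r) (by omega) (by omega)
              rw [htk, List.prod_append, ← mul_assoc, hj₁eq] at this
              exact this
            have hw'ne : valW x (w.drop j₁) ≠ 0 := by
              intro hc
              apply hw0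
              rw [← List.take_append_drop j₁ w,
                valW_append x _ _ hBne hdrop, hc, mul_zero]
            obtain ⟨Bs', Q', hsplit, hblocks, hQ⟩ := ih (w.drop j₁) hw'len hw'pref hw'ne
            refine ⟨w.take j₁ :: Bs', Q', ?_, ?_, hQ⟩
            · rw [List.flatten_cons, List.append_assoc, ← hsplit,
                List.take_append_drop]
            · intro B hB
              rcases List.mem_cons.1 hB with rfl | hB'
              · exact ⟨hBne, hBprod, by rw [List.length_take]; omega⟩
              · exact hblocks B hB'
      · push_neg at hhit
        refine ⟨[], w, by simp, by simp, ?_⟩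
        by_contra hcon
        push_neg at hcon
        refine hw0 (hIH τ w ?_ (by omega))
        intro j hj1 hj2
        exact Finset.mem_erase.2 ⟨hhit j ⟨hj1, hj2⟩, hpref j hj1 hj2⟩

end Peel

section Step
variable {S : Type*} {R : Type*} [Monoid S] [IsLeftCancelMul S] [DecidableEq S]
  [NonUnitalRing R] [DecidableEq R]
variable (A : S → AddSubgroup R)
variable {G : Type} [Semigroup G] (act : G → R → R)

lemma step
    (hmul : ∀ {g h : S} {u v : R}, u ∈ A g → v ∈ A h → u * v ∈ A (g * h))
    (hact1 : ∀ l m : G, ∀ z : R, z ∈ (A 1 : Set R) → act (l * m) z = act l (act m z))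
    (hact3 : ∀ l : G, ∀ z y : R, z ∈ (A 1 : Set R) → y ∈ (A 1 : Set R) →
      act l (z * y) = act l z * y)
    (f : R → R → G)
    (hf : ∀ a b : R, a ∈ (A 1 : Set R) → b ∈ (A 1 : Set R) → a * b = act (f a b) (b * a))
    (x : S → R) (hx : ∀ g, x g ∈ A g)
    (Sig' : Finset S) (τ : S) (hτ : τ ∈ Sig') (ℓ : ℕ) (hℓ : 1 ≤ ℓ)
    (hIH : ∀ (σ : S) (w : List S),
      (∀ j, 1 ≤ j → j ≤ w.length → σ * (w.take j).prod ∈ Sig'.erase τ) →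
      ℓ ≤ w.length → valW x w = 0)
    (s K : ℕ) (hs1 : 1 ≤ s)
    (hs : ∀ w : List S, 1 ≤ w.length → w.length ≤ ℓ → (∀ g ∈ w, x g ≠ 0) →
      w.prod = 1 → pw (valW x w) s = 0)
    (hcount : ∀ Bs : List (List S),
      (∀ B ∈ Bs, B ≠ [] ∧ B.length ≤ ℓ ∧ ∀ g ∈ B, x g ≠ 0) →
      (Bs.map (valW x)).toFinset.card ≤ K)
    (σ : S) (w : List S)
    (hpref : ∀ j, 1 ≤ j → j ≤ w.length → σ * (w.take j).prod ∈ Sig')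
    (hlen : ℓ * (K * (s - 1)) + 2 * ℓ + 1 ≤ w.length) :
    valW x w = 0 := by
  have hT0 : (0:R) ∈ (A 1 : Set R) := (A 1).zero_mem
  have hTmul : ∀ a b : R, a ∈ (A 1 : Set R) → b ∈ (A 1 : Set R) → a * b ∈ (A 1 : Set R) := by
    intro a b ha hb
    have := hmul (g := 1) (h := 1) ha hb
    rwa [one_mul] at this
  by_contra hw0
  have hlet : ∀ g ∈ w, x g ≠ 0 := by
    intro g hg hgz
    exact hw0 (valW_zero_letter x w ⟨g, hg, hgz⟩)
  by_cases hhit : ∃ j, (1 ≤ j ∧ j ≤ w.length) ∧ σ * (w.take j).prod = τ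
  · set j₀ := Nat.find hhit with hj₀def
    obtain ⟨⟨hj₀1, hj₀2⟩, hj₀eq⟩ := Nat.find_spec hhit
    have hj₀ℓ : j₀ ≤ ℓ := by
      by_contra hcon
      push_neg at hcon
      have hB' : valW x (w.take (j₀ - 1)) = 0 := by
        refine hIH σ (w.take (j₀ - 1)) ?_ ?_
        · intro r hr1 hr2
          have hlr : (w.take (j₀ - 1)).length = j₀ - 1 := by
            rw [List.length_take]; omega
          rw [hlr] at hr2
          rw [List.take_take]
          have hmin : min r (j₀ - 1) = r := by omega
          rw [hmin]
          refine Finset.mem_erase.2 ⟨?_, hpref r hr1 (by omega)⟩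
          intro hceq
          exact Nat.find_min hhit (show r < j₀ by omega) ⟨⟨hr1, by omega⟩, hceq⟩
        · rw [List.length_take]; omega
      exact hw0 (valW_prefix_zero x w (j₀ - 1) (by omega) (by omega) hB')
    -- the rest of the word
    have hdropne : w.drop j₀ ≠ [] := by
      have hld : (w.drop j₀).length = w.length - j₀ := List.length_drop ..
      intro hc
      rw [hc] at hld
      simp at hld
      omega
    have htakene : w.take j₀ ≠ [] := by
      have hlt : (w.take j₀).length = j₀ := by rw [List.length_take]; omega
      intro hc
      rw [hc] at hlt
      simp at hlt
      omega
    have hw'ne : valW x (w.drop j₀) ≠ 0 := by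
      intro hc
      apply hw0
      rw [← List.take_append_drop j₀ w, valW_append x _ _ htakene hdropne, hc, mul_zero]
    have hw'pref : ∀ j, 1 ≤ j → j ≤ (w.drop j₀).length →
        τ * ((w.drop j₀).take j).prod ∈ Sig' := by
      intro r hr1 hr2
      rw [List.length_drop] at hr2
      have htk : w.take (j₀ + r) = w.take j₀ ++ (w.drop j₀).take r := List.take_add ..
      have := hpref (j₀ + r) (by omega) (by omega)
      rw [htk, List.prod_append, ← mul_assoc, hj₀eq] at this
      exact this
    obtain ⟨Bs, Q, hsplit, hblocks, hQ⟩ :=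
      peel x Sig' τ ℓ hℓ hIH (w.drop j₀).length (w.drop j₀) le_rfl hw'pref hw'ne
    -- letters of blocks are letters of w
    have hblet : ∀ B ∈ Bs, ∀ g ∈ B, x g ≠ 0 := by
      intro B hB g hg
      refine hlet g ?_
      have h1 : g ∈ Bs.flatten := List.mem_flatten.2 ⟨B, hB, hg⟩
      have h2 : g ∈ w.drop j₀ := by
        rw [hsplit]
        exact List.mem_append_left _ h1
      exact List.drop_subset _ _ h2
    -- each block value is in A 1 and nilpotent of index s
    have hval : ∀ z ∈ Bs.map (valW x), z ∈ (A 1 : Set R) ∧ pw z s = 0 := by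
      intro z hz
      obtain ⟨B, hB, rfl⟩ := List.mem_map.1 hz
      obtain ⟨hBne, hBprod, hBlen⟩ := hblocks B hB
      constructor
      · have := valW_mem A hmul x hx B
        rwa [hBprod] at this
      · refine hs B ?_ hBlen (hblet B hB) hBprod
        cases B with
        | nil => exact absurd rfl hBne
        | cons a t => simp
    -- length accounting
    have hflatlen : Bs.flatten.length ≤ Bs.length * ℓ := by
      rw [List.length_flatten]
      calc (Bs.map List.length).sum ≤ (Bs.map List.length).length • ℓ := by
            refine List.sum_le_card_nsmul _ _ ?_
            intro n hn
            obtain ⟨B, hB, rfl⟩ := List.mem_map.1 hn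
            exact (hblocks B hB).2.2
        _ = Bs.length * ℓ := by rw [List.length_map, smul_eq_mul]
    have hwlen : w.length = j₀ + (w.drop j₀).length := by
      rw [List.length_drop]; omega
    have hsplitlen : (w.drop j₀).length = Bs.flatten.length + Q.length := by
      rw [hsplit, List.length_append]
    have hBscount : K * (s - 1) < Bs.length := by
      have : ℓ * (K * (s-1)) + 2*ℓ + 1 ≤ ℓ + Bs.length * ℓ + (ℓ - 1) := by
        omega
      have h2 : ℓ * (K * (s-1)) < ℓ * Bs.length := by
        have := this
        nlinarith [hℓ]
      exact lt_of_mul_lt_mul_left h2 (by omega)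
    -- apply lemB
    have hprodzero : prodL (Bs.map (valW x)) = 0 := by
      refine lemB (A 1 : Set R) hT0 hTmul act hact1 hact3 f hf s hs1 _ hval ?_
      have hcard := hcount Bs (fun B hB =>
        ⟨(hblocks B hB).1, (hblocks B hB).2.2, hblet B hB⟩)
      have hlen' : (Bs.map (valW x)).length = Bs.length := List.length_map ..
      calc (Bs.map (valW x)).toFinset.card * (s-1) ≤ K * (s-1) :=
            Nat.mul_le_mul_right _ hcard
        _ < Bs.length := hBscount
        _ = (Bs.map (valW x)).length := hlen'.symm
    have hBsne : Bs ≠ [] := by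
      intro hc
      subst hc
      simp at hBscount
    have hflatne : Bs.flatten ≠ [] := by
      intro hc
      rw [List.flatten_eq_nil_iff] at hc
      obtain ⟨B, hB⟩ := List.exists_mem_of_ne_nil Bs hBsne
      exact (hblocks B hB).1 (hc B hB)
    have hflatzero : valW x Bs.flatten = 0 := by
      rw [valW_flatten x Bs (fun B hB => (hblocks B hB).1)]
      exact hprodzero
    apply hw'ne
    rw [hsplit]
    cases eq_or_ne Q [] with
    | inl hQnil => rw [hQnil, List.append_nil]; exact hflatzero
    | inr hQne => rw [valW_append x _ _ hflatne hQne, hflatzero, zero_mul]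
  · push_neg at hhit
    refine hw0 (hIH σ w ?_ (by omega))
    intro j hj1 hj2
    exact Finset.mem_erase.2 ⟨hhit j ⟨hj1, hj2⟩, hpref j hj1 hj2⟩

end Step

section Masters
variable {S : Type*} {R : Type*} [Monoid S] [IsLeftCancelMul S] [DecidableEq S]
  [NonUnitalRing R] [DecidableEq R]
variable (A : S → AddSubgroup R)
variable {G : Type} [Semigroup G] (act : G → R → R)

lemma count_lemma (x : S → R) (E : Finset S) (hx' : ∀ g, x g ≠ 0 → g ∈ E) (ℓ : ℕ)
    (Bs : List (List S)) (hB : ∀ B ∈ Bs, B ≠ [] ∧ B.length ≤ ℓ ∧ ∀ g ∈ B, x g ≠ 0) :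
    (Bs.map (valW x)).toFinset.card ≤ (WSet E ℓ).card := by
  have hsub : (Bs.map (valW x)).toFinset ⊆ (WSet E ℓ).image (valW x) := by
    intro z hz
    rw [List.mem_toFinset] at hz
    obtain ⟨B, hBmem, rfl⟩ := List.mem_map.1 hz
    refine Finset.mem_image.2 ⟨B, ?_, rfl⟩
    exact mem_WSet E ℓ B (hB B hBmem).2.1 (fun g hg => hx' g ((hB B hBmem).2.2 g hg))
  calc (Bs.map (valW x)).toFinset.card ≤ ((WSet E ℓ).image (valW x)).card :=
        Finset.card_le_card hsub
    _ ≤ (WSet E ℓ).card := Finset.card_image_le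

lemma masterNil
    (hmul : ∀ {g h : S} {u v : R}, u ∈ A g → v ∈ A h → u * v ∈ A (g * h))
    (hact1 : ∀ l m : G, ∀ z : R, z ∈ (A 1 : Set R) → act (l * m) z = act l (act m z))
    (hact3 : ∀ l : G, ∀ z y : R, z ∈ (A 1 : Set R) → y ∈ (A 1 : Set R) →
      act l (z * y) = act l z * y)
    (f : R → R → G)
    (hf : ∀ a b : R, a ∈ (A 1 : Set R) → b ∈ (A 1 : Set R) → a * b = act (f a b) (b * a))
    (hnil : ∀ a ∈ A 1, IsNilE a)
    (x : S → R) (hx : ∀ g, x g ∈ A g) (E : Finset S) (hx' : ∀ g, x g ≠ 0 → g ∈ E) :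
    ∀ (n : ℕ) (Sig' : Finset S), Sig'.card ≤ n →
    ∃ L, 1 ≤ L ∧ ∀ (σ : S) (w : List S),
      (∀ j, 1 ≤ j → j ≤ w.length → σ * (w.take j).prod ∈ Sig') →
      L ≤ w.length → valW x w = 0 := by
  intro n
  induction n with
  | zero =>
      intro Sig' hcard
      refine ⟨1, le_rfl, fun σ w hpref hlen => absurd (hpref 1 le_rfl hlen) ?_⟩
      have : Sig' = ∅ := Finset.card_eq_zero.1 (by omega)
      simp [this]
  | succ n ih =>
      intro Sig' hcard
      rcases Finset.eq_empty_or_nonempty Sig' with rfl | ⟨τ, hτ⟩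
      · exact ⟨1, le_rfl, fun σ w hpref hlen => absurd (hpref 1 le_rfl hlen) (by simp)⟩
      · obtain ⟨ℓ, hℓ1, hIH⟩ := ih (Sig'.erase τ) (by
          have := Finset.card_erase_of_mem hτ
          omega)
        -- choose a uniform nilpotency index for short words of degree 1
        set V : Finset R :=
          ((WSet E ℓ).filter (fun w => w.prod = 1)).image (valW x) with hV
        have hVnil : ∀ z ∈ V, ∃ m, 1 ≤ m ∧ pw z m = 0 := by
          intro z hz
          obtain ⟨w, hw, rfl⟩ := Finset.mem_image.1 hz
          have hw1 : w.prod = 1 := (Finset.mem_filter.1 hw).2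
          have : valW x w ∈ A 1 := by
            have := valW_mem A hmul x hx w
            rwa [hw1] at this
          exact hnil _ this
        set s : ℕ := 1 + V.sup (fun z => sInf {m | 1 ≤ m ∧ pw z m = 0}) with hsdef
        have hs1 : 1 ≤ s := by omega
        have hs : ∀ w : List S, 1 ≤ w.length → w.length ≤ ℓ → (∀ g ∈ w, x g ≠ 0) →
            w.prod = 1 → pw (valW x w) s = 0 := by
          intro w hw1 hw2 hwlet hwprod
          have hmem : valW x w ∈ V := by
            refine Finset.mem_image.2 ⟨w, Finset.mem_filter.2 ⟨?_, hwprod⟩, rfl⟩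
            exact mem_WSet E ℓ w hw2 (fun g hg => hx' g (hwlet g hg))
          obtain ⟨m, hm1, hm0⟩ := hVnil _ hmem
          have hne : {m | 1 ≤ m ∧ pw (valW x w) m = 0}.Nonempty := ⟨m, hm1, hm0⟩
          have hspec := Nat.sInf_mem hne
          refine pw_zero_mono _ _ s hspec.1 hspec.2 ?_
          have hle : sInf {m | 1 ≤ m ∧ pw (valW x w) m = 0} ≤
              V.sup (fun z => sInf {m | 1 ≤ m ∧ pw z m = 0}) :=
            Finset.le_sup (f := fun z => sInf {m | 1 ≤ m ∧ pw z m = 0}) hmem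
          omega
        set K : ℕ := (WSet E ℓ).card with hK
        refine ⟨ℓ * (K * (s - 1)) + 2 * ℓ + 1, by omega, ?_⟩
        intro σ w hpref hlen
        exact step A act hmul hact1 hact3 f hf x hx Sig' τ hτ ℓ hℓ1 hIH s K hs1 hs
          (count_lemma x E hx' ℓ) σ w hpref hlen

lemma masterBdd
    (hmul : ∀ {g h : S} {u v : R}, u ∈ A g → v ∈ A h → u * v ∈ A (g * h))
    (hact1 : ∀ l m : G, ∀ z : R, z ∈ (A 1 : Set R) → act (l * m) z = act l (act m z))
    (hact3 : ∀ l : G, ∀ z y : R, z ∈ (A 1 : Set R) → y ∈ (A 1 : Set R) →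
      act l (z * y) = act l z * y)
    (f : R → R → G)
    (hf : ∀ a b : R, a ∈ (A 1 : Set R) → b ∈ (A 1 : Set R) → a * b = act (f a b) (b * a))
    (E : Finset S) (s : ℕ) (hs1 : 1 ≤ s) (hsA : ∀ b ∈ A 1, pw b s = 0) :
    ∀ (n : ℕ), ∃ L, 1 ≤ L ∧ ∀ (Sig' : Finset S), Sig'.card ≤ n →
    ∀ (x : S → R), (∀ g, x g ∈ A g) → (∀ g, x g ≠ 0 → g ∈ E) →
    ∀ (σ : S) (w : List S),
      (∀ j, 1 ≤ j → j ≤ w.length → σ * (w.take j).prod ∈ Sig') →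
      L ≤ w.length → valW x w = 0 := by
  intro n
  induction n with
  | zero =>
      refine ⟨1, le_rfl, fun Sig' hcard x hx hx' σ w hpref hlen =>
        absurd (hpref 1 le_rfl hlen) ?_⟩
      have : Sig' = ∅ := Finset.card_eq_zero.1 (by omega)
      simp [this]
  | succ n ih =>
      obtain ⟨ℓ, hℓ1, hIH⟩ := ih
      set K : ℕ := (WSet E ℓ).card with hK
      refine ⟨ℓ * (K * (s - 1)) + 2 * ℓ + 1, by omega, ?_⟩
      intro Sig' hcard x hx hx' σ w hpref hlen
      rcases Finset.eq_empty_or_nonempty Sig' with rfl | ⟨τ, hτ⟩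
      · exact absurd (hpref 1 le_rfl (by omega)) (by simp)
      · have hIH' : ∀ (σ' : S) (w' : List S),
            (∀ j, 1 ≤ j → j ≤ w'.length → σ' * (w'.take j).prod ∈ Sig'.erase τ) →
            ℓ ≤ w'.length → valW x w' = 0 := by
          intro σ' w' hpref' hlen'
          refine hIH (Sig'.erase τ) ?_ x hx hx' σ' w' hpref' hlen'
          have := Finset.card_erase_of_mem hτ
          omega
        have hs : ∀ v : List S, 1 ≤ v.length → v.length ≤ ℓ → (∀ g ∈ v, x g ≠ 0) →
            v.prod = 1 → pw (valW x v) s = 0 := by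
          intro v _ _ _ hvprod
          refine hsA _ ?_
          have := valW_mem A hmul x hx v
          rwa [hvprod] at this
        exact step A act hmul hact1 hact3 f hf x hx Sig' τ hτ ℓ hℓ1 hIH' s K hs1 hs
          (count_lemma x E hx' ℓ) σ w hpref hlen

end Masters

section Assembly
variable {S : Type*} {R : Type*} [Monoid S] [DecidableEq S] [NonUnitalRing R]

lemma pw_mem_closure (x : S → R) (F : Finset S) (a : R) (ha : a = ∑ g ∈ F, x g) :
    ∀ n : ℕ, 1 ≤ n → pw a n ∈
      AddSubgroup.closure {v : R | ∃ w : List S, w.length = n ∧ v = valW x w} := by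
  intro n
  induction n with
  | zero => omega
  | succ n ihn =>
      intro _
      rcases Nat.eq_zero_or_pos n with rfl | hn
      · have h1 : pw a 1 = a := rfl
        rw [h1, ha]
        refine AddSubgroup.sum_mem _ (fun g _ => AddSubgroup.subset_closure ?_)
        exact ⟨[g], rfl, (valW_singleton x g).symm⟩
      · have h1 : pw a (n+1) = ∑ g ∈ F, pw a n * x g := by
          rw [pw_succ a n hn, ← Finset.mul_sum, ← ha]
        rw [h1]
        refine AddSubgroup.sum_mem _ (fun g _ => ?_)
        refine AddSubgroup.closure_induction
          (p := fun z _ => z * x g ∈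
            AddSubgroup.closure {v : R | ∃ w : List S, w.length = n + 1 ∧ v = valW x w})
          ?_ ?_ ?_ ?_ (ihn hn)
        · rintro v ⟨w, hwlen, rfl⟩
          refine AddSubgroup.subset_closure ⟨w ++ [g], by simp [hwlen], ?_⟩
          rw [valW_append x w [g] ?_ (by simp), valW_singleton]
          intro hc
          rw [hc] at hwlen
          simp at hwlen
          omega
        · show (0:R) * x g ∈ _
          rw [zero_mul]; exact AddSubgroup.zero_mem _
        · intro p q _ _ hp hq
          show (p + q) * x g ∈ _
          rw [add_mul]; exact AddSubgroup.add_mem _ hp hq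
        · intro p _ hp
          show (-p) * x g ∈ _
          rw [neg_mul]; exact AddSubgroup.neg_mem _ hp

lemma pw_eq_zero_of_words (x : S → R) (F : Finset S) (a : R) (ha : a = ∑ g ∈ F, x g)
    (n : ℕ) (hn : 1 ≤ n) (h : ∀ w : List S, w.length = n → valW x w = 0) :
    pw a n = 0 := by
  have hmem := pw_mem_closure x F a ha n hn
  have hle : AddSubgroup.closure {v : R | ∃ w : List S, w.length = n ∧ v = valW x w} ≤ ⊥ := by
    rw [AddSubgroup.closure_le]
    rintro v ⟨w, hwlen, rfl⟩
    simp [h w hwlen]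
  exact AddSubgroup.mem_bot.1 (hle hmem)

end Assembly


open scoped DirectSum in
theorem stmt_6 {S R : Type*} [Monoid S] [IsLeftCancelMul S] [DecidableEq S]
    [NonUnitalRing R] (A : S → AddSubgroup R) (hA : IsGrading A)
    (hfin : {g : S | A g ≠ ⊥}.Finite)
    (hfc : IsFCommutativeOn (A 1 : Set R)) (hnil : ∀ a ∈ A 1, IsNilE a) :
    IsNilRing R ∧
      ∀ s, 1 ≤ s → (∀ a ∈ A 1, pw a s = 0) →
        ∃ t, 1 ≤ t ∧ ∀ a : R, pw a t = 0 := by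
  classical
  obtain ⟨G, hGsg, act, hact1, hact2, hact3, f, hf⟩ := hfc
  letI : Semigroup G := hGsg
  have hmul : ∀ {g h : S} {u v : R}, u ∈ A g → v ∈ A h → u * v ∈ A (g * h) := hA.mul_mem
  set E : Finset S := hfin.toFinset with hE
  -- decomposition machinery
  set e : (⨁ g, A g) ≃+ R := AddEquiv.ofBijective (DirectSum.coeAddMonoidHom A)
    hA.isInternal with he
  have hdecomp : ∀ a : R, ∃ (x : S → R) (F : Finset S),
      (∀ g, x g ∈ A g) ∧ (∀ g, x g ≠ 0 → g ∈ E) ∧ a = ∑ g ∈ F, x g := by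
    intro a
    set u := e.symm a with hu
    refine ⟨fun g => (u g : R), u.support, fun g => (u g).2, ?_, ?_⟩
    · intro g hg
      refine hfin.mem_toFinset.2 ?_
      intro hbot
      apply hg
      rw [AddSubgroup.eq_bot_iff_forall] at hbot
      exact hbot _ (u g).2
    · have h1 := DirectSum.sum_support_of u
      have h2 := congrArg e h1
      rw [map_sum] at h2
      have h3 : ∀ g, e (DirectSum.of (fun g => A g) g (u g)) = (u g : R) := by
        intro g
        rw [he]
        show DirectSum.coeAddMonoidHom A (DirectSum.of (fun g => A g) g (u g)) = _
        exact DirectSum.coeAddMonoidHom_of (fun g => A g) g (u g)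
      rw [AddEquiv.apply_symm_apply] at h2
      rw [← h2]
      exact Finset.sum_congr rfl (fun g _ => by simpa using h3 g)
  -- word killing from master lemmas
  have hkill : ∀ (x : S → R), (∀ g, x g ∈ A g) →
      ∀ L, (∀ (σ : S) (w : List S),
        (∀ j, 1 ≤ j → j ≤ w.length → σ * (w.take j).prod ∈ E) →
        L ≤ w.length → valW x w = 0) →
      ∀ w : List S, L ≤ w.length → valW x w = 0 := by
    intro x hx L hML w hwlen
    by_cases hz : ∃ j, (1 ≤ j ∧ j ≤ w.length) ∧ valW x (w.take j) = 0
    · obtain ⟨j, ⟨hj1, hj2⟩, hj0⟩ := hz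
      exact valW_prefix_zero x w j hj1 hj2 hj0
    · push_neg at hz
      refine hML 1 w ?_ hwlen
      intro j hj1 hj2
      rw [one_mul]
      have hvne : valW x (w.take j) ≠ 0 := hz j ⟨hj1, hj2⟩
      have hvmem := valW_mem A hmul x hx (w.take j)
      refine hfin.mem_toFinset.2 ?_
      intro hbot
      rw [hbot] at hvmem
      exact hvne (AddSubgroup.mem_bot.1 hvmem)
  constructor
  · -- nil part
    intro a
    obtain ⟨x, F, hx, hx', ha⟩ := hdecomp a
    obtain ⟨L, hL1, hML⟩ := masterNil A act hmul hact1 hact3 f hf hnil x hx E hx'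
      E.card E le_rfl
    refine ⟨L, hL1, ?_⟩
    refine pw_eq_zero_of_words x F a ha L hL1 ?_
    intro w hwlen
    exact hkill x hx L hML w (by omega)
  · -- bounded part
    intro s hs1 hsA
    obtain ⟨L, hL1, hML⟩ := masterBdd A act hmul hact1 hact3 f hf E s hs1 hsA E.card
    refine ⟨L, hL1, ?_⟩
    intro a
    obtain ⟨x, F, hx, hx', ha⟩ := hdecomp a
    refine pw_eq_zero_of_words x F a ha L hL1 ?_
    intro w hwlen
    exact hkill x hx L (fun σ w' hp hl => hML E le_rfl x hx hx' σ w' hp hl) w (by omega)
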